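/- arXiv:1505.03604 — 2 statements merged into one kernel-verified Lean document; each statement's English description precedes it below -/
import Mathlib

section
/- Let X be a real Banach space whose modulus of smoothness satisfies ρ(u) ≤ γ u^q for all u > 0, where 1 < q ≤ 2 and γ > 0 is a constant, let D be a dictionary in X, and let f ∈ A_1(D). Suppose (f_m)_{m≥0} is generated by the Rescaled Pure Greedy Algorithm RPGA(D) for f: f_0 = 0, and for each m ≥ 1, if f_{m−1} = f then f_m := f; otherwise, with F_{f−f_{m−1}} a norming functional of f − f_{m−1}, choose φ_m ∈ D with |F_{f−f_{m−1}}(φ_m)| = sup_{φ∈D} |F_{f−f_{m−1}}(φ)|, set λ_m := sign(F_{f−f_{m−1}}(φ_m)) · ‖f − f_{m−1}‖ · (2γq)^{1/(1−q)} · |F_{f−f_{m−1}}(φ_m)|^{1/(q−1)}, ĥ_m := f_{m−1} + λ_m φ_m, choose s_m ∈ ℝ with ‖f − s_m ĥ_m‖ = min_{s∈ℝ} ‖f − s ĥ_m‖, and set f_m := s_m ĥ_m. Then there is a constant c = c(γ, q) such that for every m ≥ 2, ‖f − f_m‖ ≤ c · |f|_{A_1(D)} · m^{1/q − 1}. -/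
open scoped BigOperators

universe u

/-- A dictionary in a normed space: a set of norm-one elements with dense linear span. -/
def IsDictionary (X : Type u) [NormedAddCommGroup X] [NormedSpace ℝ X] (D : Set X) : Prop :=
  (∀ φ ∈ D, ‖φ‖ = 1) ∧ Dense (Submodule.span ℝ D : Set X)

/-- Finite linear combinations of dictionary elements with coefficients of total
absolute sum at most `M`. -/
def A1Pre (X : Type u) [NormedAddCommGroup X] [NormedSpace ℝ X] (D : Set X) (M : ℝ) : Set X :=
  {g | ∃ (n : ℕ) (c : Fin n → ℝ) (φ : Fin n → X),
    (∀ i, φ i ∈ D) ∧ (∑ i, |c i|) ≤ M ∧ g = ∑ i, c i • φ i}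

/-- The class `A₁(D, M)`: the closure of `A1Pre`. -/
def A1 (X : Type u) [NormedAddCommGroup X] [NormedSpace ℝ X] (D : Set X) (M : ℝ) : Set X :=
  closure (A1Pre X D M)

/-- The class `A₁(D)`: the union of the classes `A₁(D, M)` over all `M > 0`. -/
def A1Class (X : Type u) [NormedAddCommGroup X] [NormedSpace ℝ X] (D : Set X) : Set X :=
  ⋃ M ∈ Set.Ioi (0 : ℝ), A1 X D M

/-- The "semi-norm" `|f|_{A₁(D)} = inf {M : f ∈ A₁(D, M)}`. -/
noncomputable def A1Norm (X : Type u) [NormedAddCommGroup X] [NormedSpace ℝ X]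
    (D : Set X) (f : X) : ℝ :=
  sInf {M : ℝ | 0 < M ∧ f ∈ A1 X D M}

/-- The modulus of smoothness of a real normed space `X`:
`ρ(u) = sup{(‖f + u g‖ + ‖f − u g‖)/2 − 1 : ‖f‖ = ‖g‖ = 1}`. -/
noncomputable def modulusOfSmoothness (X : Type u) [NormedAddCommGroup X] [NormedSpace ℝ X]
    (u : ℝ) : ℝ :=
  sSup {x : ℝ | ∃ f g : X, ‖f‖ = 1 ∧ ‖g‖ = 1 ∧ x = (‖f + u • g‖ + ‖f - u • g‖) / 2 - 1}

lemma smooth_bound {X : Type u} [NormedAddCommGroup X] [NormedSpace ℝ X]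
    {γ q : ℝ} (hρ : ∀ u : ℝ, 0 < u → modulusOfSmoothness X u ≤ γ * u ^ q)
    (a b : X) (ha : a ≠ 0) (hb : b ≠ 0) {u : ℝ} (hu : 0 < u) :
    ‖a + u • b‖ + ‖a - u • b‖ ≤ 2 * ‖a‖ * (1 + γ * (u * ‖b‖ / ‖a‖) ^ q) := by
  have hna : (0:ℝ) < ‖a‖ := norm_pos_iff.mpr ha
  have hnb : (0:ℝ) < ‖b‖ := norm_pos_iff.mpr hb
  set u' : ℝ := u * ‖b‖ / ‖a‖ with hu'
  have hu'0 : 0 < u' := by positivity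
  set f : X := (‖a‖ : ℝ)⁻¹ • a with hf
  set g : X := (‖b‖ : ℝ)⁻¹ • b with hg
  have hnf : ‖f‖ = 1 := by
    rw [hf, norm_smul, norm_inv, Real.norm_eq_abs, abs_of_pos hna, inv_mul_cancel₀ hna.ne']
  have hng : ‖g‖ = 1 := by
    rw [hg, norm_smul, norm_inv, Real.norm_eq_abs, abs_of_pos hnb, inv_mul_cancel₀ hnb.ne']
  have hbdd : BddAbove {x : ℝ | ∃ f g : X, ‖f‖ = 1 ∧ ‖g‖ = 1 ∧
      x = (‖f + u' • g‖ + ‖f - u' • g‖) / 2 - 1} := by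
    refine ⟨u', ?_⟩
    rintro x ⟨f₀, g₀, hf₀, hg₀, rfl⟩
    have h1 : ‖f₀ + u' • g₀‖ ≤ 1 + u' := by
      calc ‖f₀ + u' • g₀‖ ≤ ‖f₀‖ + ‖u' • g₀‖ := norm_add_le _ _
        _ = 1 + u' := by rw [hf₀, norm_smul, Real.norm_eq_abs, abs_of_pos hu'0, hg₀, mul_one]
    have h2 : ‖f₀ - u' • g₀‖ ≤ 1 + u' := by
      calc ‖f₀ - u' • g₀‖ ≤ ‖f₀‖ + ‖u' • g₀‖ := norm_sub_le _ _
        _ = 1 + u' := by rw [hf₀, norm_smul, Real.norm_eq_abs, abs_of_pos hu'0, hg₀, mul_one]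
    linarith
  have hmem : (‖f + u' • g‖ + ‖f - u' • g‖) / 2 - 1 ∈ {x : ℝ | ∃ f g : X, ‖f‖ = 1 ∧ ‖g‖ = 1 ∧
      x = (‖f + u' • g‖ + ‖f - u' • g‖) / 2 - 1} := ⟨f, g, hnf, hng, rfl⟩
  have hle : (‖f + u' • g‖ + ‖f - u' • g‖) / 2 - 1 ≤ γ * u' ^ q :=
    (le_csSup hbdd hmem).trans (hρ u' hu'0)
  have hid1 : ‖a‖ • (f + u' • g) = a + u • b := by
    rw [hf, hg, smul_add, smul_smul, smul_smul, smul_smul]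
    congr 1
    · rw [mul_inv_cancel₀ hna.ne', one_smul]
    · congr 1
      field_simp [hu']
      rw [hu']; field_simp
  have hid2 : ‖a‖ • (f - u' • g) = a - u • b := by
    rw [hf, hg, smul_sub, smul_smul, smul_smul, smul_smul]
    congr 1
    · rw [mul_inv_cancel₀ hna.ne', one_smul]
    · congr 1
      field_simp [hu']
      rw [hu']; field_simp
  have e1 : ‖a + u • b‖ = ‖a‖ * ‖f + u' • g‖ := by
    rw [← hid1, norm_smul, Real.norm_eq_abs, abs_of_pos hna]
  have e2 : ‖a - u • b‖ = ‖a‖ * ‖f - u' • g‖ := by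
    rw [← hid2, norm_smul, Real.norm_eq_abs, abs_of_pos hna]
  rw [e1, e2]
  nlinarith [hle, hna]

lemma rpga_rec_rate {p c : ℝ} (hp : 1 ≤ p) (hc : 0 < c) (x : ℕ → ℝ)
    (hx0 : ∀ m, 0 ≤ x m) (hx1 : x 0 ≤ 1)
    (hrec : ∀ m, x (m + 1) ≤ x m * (1 - c * x m ^ p)) :
    ∀ m : ℕ, 1 ≤ m → x m ≤ (p * c * m) ^ (-(1 : ℝ) / p) := by
  have hp0 : 0 < p := lt_of_lt_of_le one_pos hp
  have key : ∀ m : ℕ, x m = 0 ∨ 1 + p * c * m ≤ (x m) ^ (-p) := by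
    intro m
    induction m with
    | zero =>
      rcases eq_or_lt_of_le (hx0 0) with h | h
      · exact Or.inl h.symm
      · right
        have h1 : (x 0) ^ p ≤ 1 := Real.rpow_le_one (hx0 0) hx1 hp0.le
        have h2 : (0:ℝ) < (x 0) ^ p := Real.rpow_pos_of_pos h p
        rw [Real.rpow_neg (hx0 0)]
        push_cast
        rw [mul_zero, add_zero, le_inv_comm₀ one_pos h2]
        simpa using h1
    | succ m ih =>
      rcases eq_or_lt_of_le (hx0 (m+1)) with h | hpos
      · exact Or.inl h.symm
      right
      have hxm : 0 < x m := by
        rcases eq_or_lt_of_le (hx0 m) with h0 | h0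
        · exfalso
          have := hrec m
          rw [← h0] at this
          simp at this
          exact absurd (le_antisymm this (hx0 (m+1))) hpos.ne'
        · exact h0
      have ihm : 1 + p * c * m ≤ (x m) ^ (-p) := by
        rcases ih with h0 | h0
        · exact absurd h0 hxm.ne'
        · exact h0
      set a : ℝ := c * x m ^ p with ha
      have ha0 : 0 < a := mul_pos hc (Real.rpow_pos_of_pos hxm p)
      have ha1 : a < 1 := by
        by_contra hcon
        push_neg at hcon
        have : x m * (1 - a) ≤ 0 := mul_nonpos_of_nonneg_of_nonpos hxm.le (by linarith)
        exact absurd (le_antisymm ((hrec m).trans this) (hx0 (m+1))) hpos.ne'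
      have h1a : (0:ℝ) < 1 - a := by linarith
      have hb : 0 < x m * (1 - a) := mul_pos hxm h1a
      have mono : (x m * (1 - a)) ^ (-p) ≤ (x (m+1)) ^ (-p) := by
        rw [Real.rpow_neg hb.le, Real.rpow_neg (hx0 (m+1))]
        exact inv_anti₀ (Real.rpow_pos_of_pos hpos p)
          (Real.rpow_le_rpow (hx0 (m+1)) (hrec m) hp0.le)
      have split : (x m * (1 - a)) ^ (-p) = (x m) ^ (-p) * (1 - a) ^ (-p) :=
        Real.mul_rpow hxm.le h1a.le
      have bern : 1 + p * a ≤ (1 - a) ^ (-p) := by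
        have hs : a ≤ a / (1 - a) := by
          rw [le_div_iff₀ h1a]
          nlinarith
        have hinv : (1 - a) ^ (-p) = (1 + a / (1 - a)) ^ p := by
          rw [Real.rpow_neg h1a.le, ← Real.inv_rpow h1a.le]
          congr 1
          field_simp
          ring
        rw [hinv]
        calc 1 + p * a ≤ 1 + p * (a / (1 - a)) := by nlinarith
          _ ≤ (1 + a / (1 - a)) ^ p :=
            one_add_mul_self_le_rpow_one_add
              (le_trans (by norm_num : (-1:ℝ) ≤ 0) (by positivity)) hp
      have hxp : (x m) ^ (-p) * a = c := by
        rw [ha, Real.rpow_neg hxm.le, mul_comm c, ← mul_assoc,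
          inv_mul_cancel₀ (Real.rpow_pos_of_pos hxm p).ne', one_mul]
      have step : (x m) ^ (-p) * (1 + p * a) = (x m) ^ (-p) + p * c := by
        linear_combination p * hxp
      have final : (x m) ^ (-p) + p * c ≤ (x (m+1)) ^ (-p) := by
        calc (x m) ^ (-p) + p * c = (x m) ^ (-p) * (1 + p * a) := step.symm
          _ ≤ (x m) ^ (-p) * (1 - a) ^ (-p) :=
            mul_le_mul_of_nonneg_left bern (Real.rpow_nonneg hxm.le _)
          _ = (x m * (1 - a)) ^ (-p) := split.symm
          _ ≤ (x (m+1)) ^ (-p) := mono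
      push_cast
      linarith
  intro m hm
  have hmpos : (0:ℝ) < p * c * m := by
    have : (1:ℝ) ≤ (m:ℝ) := by exact_mod_cast hm
    positivity
  rcases key m with h0 | h0
  · rw [h0]; positivity
  have hxm : 0 < x m := by
    rcases eq_or_lt_of_le (hx0 m) with h | h
    · exfalso
      rw [← h, Real.zero_rpow (neg_ne_zero.mpr hp0.ne')] at h0
      nlinarith
    · exact h
  have h1 : p * c * m ≤ (x m) ^ (-p) := by linarith
  have h2 : (p * c * m) ^ ((1:ℝ)/p) ≤ ((x m) ^ (-p)) ^ ((1:ℝ)/p) :=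
    Real.rpow_le_rpow hmpos.le h1 (by positivity)
  have h3 : ((x m) ^ (-p)) ^ ((1:ℝ)/p) = (x m)⁻¹ := by
    rw [← Real.rpow_mul hxm.le]
    have : -p * (1/p) = -1 := by field_simp
    rw [this, Real.rpow_neg_one]
  have h4 : (p * c * m) ^ (-(1:ℝ)/p) = ((p * c * m) ^ ((1:ℝ)/p))⁻¹ := by
    rw [neg_div, Real.rpow_neg hmpos.le]
  rw [h4]
  rw [h3] at h2
  exact (le_inv_comm₀ (by positivity) hxm).mp h2

lemma norming_kills {X : Type u} [NormedAddCommGroup X] [NormedSpace ℝ X]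
    {γ q : ℝ} (hγ : 0 < γ) (hq1 : 1 < q)
    (hρ : ∀ u : ℝ, 0 < u → modulusOfSmoothness X u ≤ γ * u ^ q)
    (f h : X) (s : ℝ) (hr : f - s • h ≠ 0)
    (F : X →L[ℝ] ℝ) (hFn : ‖F‖ = 1) (hFr : F (f - s • h) = ‖f - s • h‖)
    (hmin : ∀ s' : ℝ, ‖f - s • h‖ ≤ ‖f - s' • h‖) :
    F h = 0 := by
  by_cases hh : h = 0
  · simp [hh]
  set r : X := f - s • h with hrdef
  set e : ℝ := ‖r‖ with he
  have he0 : 0 < e := norm_pos_iff.mpr hr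
  set K : ℝ := 2 * e * γ * (‖h‖ / e) ^ q with hK
  have hK0 : 0 < K := by
    have : (0:ℝ) < ‖h‖ / e := div_pos (norm_pos_iff.mpr hh) he0
    have := Real.rpow_pos_of_pos this q
    positivity
  have claim : ∀ t : ℝ, 0 < t → |F h| * t ≤ K * t ^ q := by
    intro t ht
    have hsm := smooth_bound hρ r h hr hh ht
    have hplus : r + t • h = f - (s - t) • h := by
      rw [hrdef, sub_smul]; abel
    have hminus : r - t • h = f - (s + t) • h := by
      rw [hrdef, add_smul]; abel
    have hm1 : e ≤ ‖r + t • h‖ := by rw [hplus]; exact hmin (s - t)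
    have hm2 : e ≤ ‖r - t • h‖ := by rw [hminus]; exact hmin (s + t)
    have hF1 : e + t * F h ≤ ‖r + t • h‖ := by
      have : F (r + t • h) ≤ |F (r + t • h)| := le_abs_self _
      have hle : |F (r + t • h)| ≤ ‖r + t • h‖ := by
        have := F.le_opNorm (r + t • h)
        rwa [hFn, one_mul] at this
      have heq : F (r + t • h) = e + t * F h := by
        rw [map_add, map_smul, hFr, smul_eq_mul]
      linarith
    have hF2 : e - t * F h ≤ ‖r - t • h‖ := by
      have : F (r - t • h) ≤ |F (r - t • h)| := le_abs_self _
      have hle : |F (r - t • h)| ≤ ‖r - t • h‖ := by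
        have := F.le_opNorm (r - t • h)
        rwa [hFn, one_mul] at this
      have heq : F (r - t • h) = e - t * F h := by
        rw [map_sub, map_smul, hFr, smul_eq_mul]
      linarith
    have hexp : γ * (t * ‖h‖ / e) ^ q * (2 * e) = K * t ^ q := by
      have : t * ‖h‖ / e = t * (‖h‖ / e) := by ring
      rw [this, Real.mul_rpow ht.le (by positivity), hK]
      ring
    have h1 : t * F h ≤ K * t ^ q := by nlinarith [hsm, hm2, hF1]
    have h2 : -(t * F h) ≤ K * t ^ q := by nlinarith [hsm, hm1, hF2]
    have : |t * F h| ≤ K * t ^ q := abs_le.mpr ⟨by linarith, h1⟩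
    calc |F h| * t = |t * F h| := by
          rw [abs_mul, abs_of_pos ht]; ring
      _ ≤ K * t ^ q := this
  -- conclude |F h| ≤ 0
  have habs : |F h| ≤ 0 := by
    by_contra hcon
    push_neg at hcon
    set t : ℝ := (|F h| / (2 * K)) ^ ((1:ℝ) / (q - 1)) with htdef
    have harg : (0:ℝ) < |F h| / (2 * K) := by positivity
    have ht : 0 < t := Real.rpow_pos_of_pos harg _
    have hc := claim t ht
    have htq : t ^ q = t * (|F h| / (2 * K)) := by
      have h1 : t ^ q = t ^ (1 + (q - 1)) := by norm_num
      rw [h1, Real.rpow_add ht, Real.rpow_one]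
      congr 1
      rw [htdef, ← Real.rpow_mul harg.le]
      rw [one_div_mul_cancel (by linarith : q - 1 ≠ 0), Real.rpow_one]
    rw [htq] at hc
    have : K * (t * (|F h| / (2 * K))) = t * |F h| / 2 := by
      field_simp
    rw [this] at hc
    nlinarith
  exact abs_eq_zero.mp (le_antisymm habs (abs_nonneg _))

lemma sign_mul_self' (x : ℝ) : Real.sign x * x = |x| := by
  rcases lt_trichotomy x 0 with h | h | h
  · rw [Real.sign_of_neg h, abs_of_neg h]; ring
  · simp [h]
  · rw [Real.sign_of_pos h, abs_of_pos h]; ring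

lemma step_decay {X : Type u} [NormedAddCommGroup X] [NormedSpace ℝ X]
    {γ q : ℝ} (hq1 : 1 < q) (hγ : 0 < γ)
    (hρ : ∀ u : ℝ, 0 < u → modulusOfSmoothness X u ≤ γ * u ^ q)
    (r φ : X) (hr : r ≠ 0) (hφ : ‖φ‖ = 1)
    (F : X →L[ℝ] ℝ) (hFn : ‖F‖ = 1) (hFr : F r = ‖r‖) (hA : 0 < |F φ|) :
    ‖r - (Real.sign (F φ) * ‖r‖ * (2 * γ * q) ^ ((1:ℝ) / (1 - q)) *
        |F φ| ^ ((1:ℝ) / (q - 1))) • φ‖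
      ≤ ‖r‖ * (1 - (2 * γ * q) ^ ((1:ℝ) / (1 - q)) * (q - 1) / q *
          |F φ| ^ (q / (q - 1))) := by
  set e : ℝ := ‖r‖ with he
  have he0 : 0 < e := norm_pos_iff.mpr hr
  set A : ℝ := |F φ| with hAdef
  set B : ℝ := 2 * γ * q with hB
  have hB0 : 0 < B := by positivity
  set c1 : ℝ := B ^ ((1:ℝ) / (1 - q)) with hc1
  have hc10 : 0 < c1 := Real.rpow_pos_of_pos hB0 _
  set w : ℝ := A ^ ((1:ℝ) / (q - 1)) with hw
  have hw0 : 0 < w := Real.rpow_pos_of_pos hA _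
  set t : ℝ := e * c1 * w with ht
  have ht0 : 0 < t := by positivity
  have hFφ : F φ ≠ 0 := by
    intro h0
    rw [hAdef, h0, abs_zero] at hA
    exact lt_irrefl 0 hA
  set σ : ℝ := Real.sign (F φ) with hσ
  have hσ1 : |σ| = 1 := by
    rcases lt_trichotomy (F φ) 0 with h | h | h
    · rw [hσ, Real.sign_of_neg h]; norm_num
    · exact absurd h hFφ
    · rw [hσ, Real.sign_of_pos h]; norm_num
  set ψ : X := σ • φ with hψ
  have hnψ : ‖ψ‖ = 1 := by
    rw [hψ, norm_smul, Real.norm_eq_abs, hσ1, hφ, mul_one]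
  have hψ0 : ψ ≠ 0 := by
    intro h0
    rw [h0, norm_zero] at hnψ
    norm_num at hnψ
  -- the vector being subtracted equals t • ψ
  have hvec : (σ * e * c1 * w) • φ = t • ψ := by
    rw [hψ, smul_smul, ht]
    congr 1
    ring
  -- smoothness bound
  have hsm := smooth_bound hρ r ψ hr hψ0 ht0
  rw [hnψ, mul_one, ← he] at hsm
  have hsA : σ * F φ = A := by rw [hσ, hAdef]; exact sign_mul_self' _
  -- F bound on plus term
  have hF1 : e + t * A ≤ ‖r + t • ψ‖ := by
    have hle : |F (r + t • ψ)| ≤ ‖r + t • ψ‖ := by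
      have := F.le_opNorm (r + t • ψ)
      rwa [hFn, one_mul] at this
    have heq : F (r + t • ψ) = e + t * A := by
      simp only [map_add, map_smul, smul_eq_mul, hFr, hψ]
      linear_combination t * hsA
    calc e + t * A = F (r + t • ψ) := heq.symm
      _ ≤ |F (r + t • ψ)| := le_abs_self _
      _ ≤ ‖r + t • ψ‖ := hle
  -- rpow algebra
  set P : ℝ := A ^ (q / (q - 1)) with hPdef
  have hq0 : q ≠ 0 := by positivity
  have hq1' : q - 1 ≠ 0 := by intro h; exact absurd (by linarith : q = 1) (by linarith)
  have h1q : (1:ℝ) - q ≠ 0 := by intro h; exact absurd (by linarith : q = 1) (by linarith)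
  have hP : w * A = P := by
    have hexp1 : (1:ℝ) / (q - 1) + 1 = q / (q - 1) := by field_simp; ring
    rw [hPdef, ← hexp1, Real.rpow_add hA, Real.rpow_one, hw]
  have hwq : w ^ q = P := by
    rw [hw, ← Real.rpow_mul hA.le, hPdef]
    congr 1
    field_simp
  have hc1q : c1 ^ q = c1 * B⁻¹ := by
    rw [hc1, ← Real.rpow_mul hB0.le]
    have hexp2 : (1:ℝ) / (1 - q) * q = 1 / (1 - q) + (-1) := by field_simp; ring
    rw [hexp2, Real.rpow_add hB0, Real.rpow_neg_one]
  have hte : t / e = c1 * w := by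
    rw [ht, mul_assoc, mul_comm e (c1 * w), mul_div_assoc, div_self he0.ne', mul_one]
  have heq2 : γ * (t / e) ^ q = c1 * P / (2 * q) := by
    rw [hte, Real.mul_rpow hc10.le hw0.le, hwq, hc1q, hB]
    field_simp
  have heq3 : t * A = e * c1 * P := by
    rw [ht, mul_assoc, hP]
  -- assemble
  rw [hvec]
  calc ‖r - t • ψ‖ ≤ 2 * e * (1 + γ * (t / e) ^ q) - (e + t * A) := by
        linarith [hsm, hF1]
    _ = e * (1 - c1 * (q - 1) / q * P) := by
        rw [heq2, heq3]
        field_simp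
        ring

lemma a1_norm_le {X : Type u} [NormedAddCommGroup X] [NormedSpace ℝ X] {D : Set X}
    (hD : ∀ φ ∈ D, ‖φ‖ = 1) {M : ℝ} {g : X} (hg : g ∈ A1 X D M) : ‖g‖ ≤ M := by
  have hsub : A1Pre X D M ⊆ {x : X | ‖x‖ ≤ M} := by
    rintro x ⟨n, c, φ, hφ, hc, rfl⟩
    have h1 : ‖∑ i, c i • φ i‖ ≤ ∑ i, ‖c i • φ i‖ := norm_sum_le _ _
    have h2 : ∀ i, ‖c i • φ i‖ = |c i| := by
      intro i
      rw [norm_smul, Real.norm_eq_abs, hD (φ i) (hφ i), mul_one]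
    simp only [Set.mem_setOf_eq]
    calc ‖∑ i, c i • φ i‖ ≤ ∑ i, ‖c i • φ i‖ := h1
      _ = ∑ i, |c i| := Finset.sum_congr rfl fun i _ => h2 i
      _ ≤ M := hc
  exact closure_minimal hsub (isClosed_le continuous_norm continuous_const) hg

lemma a1_functional_le {X : Type u} [NormedAddCommGroup X] [NormedSpace ℝ X] {D : Set X}
    (F : X →L[ℝ] ℝ) {A : ℝ} (hA : ∀ ψ ∈ D, |F ψ| ≤ A) (hA0 : 0 ≤ A)
    {M : ℝ} (hM : 0 ≤ M) {g : X} (hg : g ∈ A1 X D M) : F g ≤ M * A := by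
  have hsub : A1Pre X D M ⊆ {x : X | F x ≤ M * A} := by
    rintro x ⟨n, c, φ, hφ, hc, rfl⟩
    simp only [Set.mem_setOf_eq, map_sum, map_smul, smul_eq_mul]
    calc ∑ i, c i * F (φ i) ≤ ∑ i, |c i| * A := by
          refine Finset.sum_le_sum fun i _ => ?_
          calc c i * F (φ i) ≤ |c i * F (φ i)| := le_abs_self _
            _ = |c i| * |F (φ i)| := abs_mul _ _
            _ ≤ |c i| * A := mul_le_mul_of_nonneg_left (hA (φ i) (hφ i)) (abs_nonneg _)
      _ = (∑ i, |c i|) * A := (Finset.sum_mul _ _ _).symm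
      _ ≤ M * A := mul_le_mul_of_nonneg_right hc hA0
  exact closure_minimal hsub (isClosed_le F.continuous continuous_const) hg

/-- Convergence rate of the Rescaled Pure Greedy Algorithm RPGA(D) in a Banach space `X`
with modulus of smoothness `ρ(u) ≤ γ u^q`, `1 < q ≤ 2`: there is a constant `c = c(γ, q)`
such that for `f ∈ A₁(D)` the output `(f_m)` satisfies
`‖f − f_m‖ ≤ c · |f|_{A₁(D)} · m^{1/q − 1}` for all `m ≥ 2`. -/
theorem rpga_banach_rate (γ q : ℝ) (hq1 : 1 < q) (hq2 : q ≤ 2) (hγ : 0 < γ) :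
    ∃ c : ℝ, 0 < c ∧
      ∀ (X : Type u) [NormedAddCommGroup X] [NormedSpace ℝ X] [CompleteSpace X]
        (D : Set X), IsDictionary X D →
        (∀ u : ℝ, 0 < u → modulusOfSmoothness X u ≤ γ * u ^ q) →
        ∀ f ∈ A1Class X D, ∀ fseq : ℕ → X, fseq 0 = 0 →
        (∀ m : ℕ,
          (fseq m = f → fseq (m + 1) = f) ∧
          (fseq m ≠ f → ∃ (F : X →L[ℝ] ℝ) (φ : X) (lam s : ℝ),
            ‖F‖ = 1 ∧ F (f - fseq m) = ‖f - fseq m‖ ∧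
            φ ∈ D ∧ |F φ| = sSup {x : ℝ | ∃ ψ ∈ D, x = |F ψ|} ∧
            lam = Real.sign (F φ) * ‖f - fseq m‖ * (2 * γ * q) ^ ((1 : ℝ) / (1 - q)) *
              |F φ| ^ ((1 : ℝ) / (q - 1)) ∧
            (∀ s' : ℝ, ‖f - s • (fseq m + lam • φ)‖ ≤ ‖f - s' • (fseq m + lam • φ)‖) ∧
            fseq (m + 1) = s • (fseq m + lam • φ))) →
        ∀ m : ℕ, 2 ≤ m →
          ‖f - fseq m‖ ≤ c * A1Norm X D f * (m : ℝ) ^ ((1 : ℝ) / q - 1) := by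
  have hq0 : (0:ℝ) < q := by linarith
  have hq1' : (0:ℝ) < q - 1 := by linarith
  set p : ℝ := q / (q - 1) with hpdef
  have hp1 : 1 ≤ p := by
    rw [hpdef, le_div_iff₀ hq1']
    linarith
  have hp0 : 0 < p := lt_of_lt_of_le one_pos hp1
  set c1 : ℝ := (2 * γ * q) ^ ((1:ℝ) / (1 - q)) with hc1
  have hc10 : 0 < c1 := Real.rpow_pos_of_pos (by positivity) _
  set c2 : ℝ := c1 * (q - 1) / q with hc2
  have hc20 : 0 < c2 := by positivity
  refine ⟨(p * c2) ^ (-(1:ℝ) / p), Real.rpow_pos_of_pos (by positivity) _, ?_⟩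
  intro X _ _ _ D hD hρ f hf fseq h0 hstep m hm
  obtain ⟨hD1, _⟩ := hD
  set N : ℝ := A1Norm X D f with hNdef
  have hSne : {M : ℝ | 0 < M ∧ f ∈ A1 X D M}.Nonempty := by
    simp only [A1Class, Set.mem_iUnion, Set.mem_Ioi, exists_prop] at hf
    obtain ⟨M, hM, hfM⟩ := hf
    exact ⟨M, hM, hfM⟩
  have hfN : ‖f‖ ≤ N :=
    le_csInf hSne (fun M hM => a1_norm_le hD1 hM.2)
  have hN0 : 0 ≤ N := le_trans (norm_nonneg f) hfN
  by_cases hNz : N = 0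
  · have hf0 : f = 0 := by
      rw [hNz] at hfN
      exact norm_le_zero_iff.mp hfN
    have hall : ∀ k, fseq k = f := by
      intro k
      induction k with
      | zero => rw [h0, hf0]
      | succ k ih => exact (hstep k).1 ih
    rw [hall m, sub_self, norm_zero]
    have h1 : (0:ℝ) ≤ (m:ℝ) ^ ((1:ℝ) / q - 1) := Real.rpow_nonneg (Nat.cast_nonneg m) _
    have h2 : (0:ℝ) ≤ (p * c2) ^ (-(1:ℝ) / p) := (Real.rpow_pos_of_pos (by positivity) _).le
    exact mul_nonneg (mul_nonneg h2 hN0) h1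
  have hNpos : 0 < N := lt_of_le_of_ne hN0 (Ne.symm hNz)
  -- main recursive inequality
  have main : ∀ k, ‖f - fseq (k + 1)‖ ≤
      ‖f - fseq k‖ * (1 - c2 * (‖f - fseq k‖ / N) ^ p) := by
    intro k
    by_cases hfk : fseq k = f
    · rw [(hstep k).1 hfk, hfk, sub_self, norm_zero, zero_div,
        Real.zero_rpow hp0.ne']
      norm_num
    · obtain ⟨F, φ, lam, s, hFn, hFr, hφD, hφmax, hlam, hmin, hnext⟩ := (hstep k).2 hfk
      set r : X := f - fseq k with hrdef
      have hr : r ≠ 0 := sub_ne_zero.mpr (fun h => hfk h.symm)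
      have he0 : 0 < ‖r‖ := norm_pos_iff.mpr hr
      -- the norming functional annihilates fseq k
      have hFz : F (fseq k) = 0 := by
        cases k with
        | zero => rw [h0, map_zero]
        | succ j =>
          have hfj : fseq j ≠ f := fun h => hfk ((hstep j).1 h)
          obtain ⟨F', φ', lam', s', _, _, _, _, _, hmin', hnext'⟩ := (hstep j).2 hfj
          have hrs : f - fseq (j + 1) = f - s' • (fseq j + lam' • φ') := by rw [hnext']
          have hkill : F (fseq j + lam' • φ') = 0 := by
            refine norming_kills hγ hq1 hρ f (fseq j + lam' • φ') s' ?_ F ?_ ?_ ?_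
            · rw [← hrs]; exact hr
            · exact hFn
            · rw [← hrs]; exact hFr
            · intro s''
              rw [← hrs]
              calc ‖f - fseq (j+1)‖ ≤ ‖f - s'' • (fseq j + lam' • φ')‖ := by
                    rw [hnext']; exact hmin' s''
                _ = ‖f - s'' • (fseq j + lam' • φ')‖ := rfl
          rw [hnext', map_smul, smul_eq_mul, hkill, mul_zero]
      have hFf : F f = ‖r‖ := by
        have h1 : F r = F f - F (fseq k) := by rw [hrdef, map_sub]
        rw [hFz, sub_zero] at h1
        rw [← h1]
        exact hFr
      -- facts about A = |F φ|
      have hφn : ‖φ‖ = 1 := hD1 φ hφD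
      have hA1 : |F φ| ≤ 1 := by
        have := F.le_opNorm φ
        rwa [hFn, one_mul, hφn] at this
      have hbdd : BddAbove {x : ℝ | ∃ ψ ∈ D, x = |F ψ|} := by
        refine ⟨1, ?_⟩
        rintro x ⟨ψ, hψ, rfl⟩
        have := F.le_opNorm ψ
        rwa [hFn, one_mul, hD1 ψ hψ] at this
      have hub : ∀ ψ ∈ D, |F ψ| ≤ |F φ| := by
        intro ψ hψ
        rw [hφmax]
        exact le_csSup hbdd ⟨ψ, hψ, rfl⟩
      have heMA : ∀ M : ℝ, (0 < M ∧ f ∈ A1 X D M) → ‖r‖ ≤ M * |F φ| := by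
        intro M hM
        have := a1_functional_le F hub (abs_nonneg _) hM.1.le hM.2
        rw [hFf] at this
        exact this
      have hApos : 0 < |F φ| := by
        obtain ⟨M, hM⟩ := hSne
        have h1 := heMA M hM
        rcases lt_or_ge 0 (|F φ|) with h | h
        · exact h
        · exfalso
          have : M * |F φ| ≤ 0 := mul_nonpos_of_nonneg_of_nonpos hM.1.le h
          linarith
      have heNA : ‖r‖ / N ≤ |F φ| := by
        have hlow : ‖r‖ / |F φ| ≤ N := by
          refine le_csInf hSne (fun M hM => ?_)
          rw [div_le_iff₀ hApos]
          exact heMA M hM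
        rw [div_le_iff₀ hNpos]
        calc ‖r‖ = ‖r‖ / |F φ| * |F φ| := by field_simp
          _ ≤ N * |F φ| := mul_le_mul_of_nonneg_right hlow hApos.le
          _ = |F φ| * N := mul_comm _ _
      -- one-step decay
      have hsd := step_decay hq1 hγ hρ r φ hr hφn F hFn hFr hApos
      have hstep1 : ‖f - fseq (k + 1)‖ ≤ ‖r - lam • φ‖ := by
        rw [hnext]
        have h1 := hmin 1
        rw [one_smul] at h1
        have h2 : f - (fseq k + lam • φ) = r - lam • φ := by rw [hrdef]; abel
        rw [h2] at h1
        exact h1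
      have hAp : (‖r‖ / N) ^ p ≤ |F φ| ^ p :=
        Real.rpow_le_rpow (by positivity) heNA hp0.le
      calc ‖f - fseq (k + 1)‖ ≤ ‖r - lam • φ‖ := hstep1
        _ ≤ ‖r‖ * (1 - c2 * |F φ| ^ p) := by
            rw [hlam]
            calc ‖r - (Real.sign (F φ) * ‖r‖ * (2 * γ * q) ^ ((1:ℝ) / (1 - q)) *
                    |F φ| ^ ((1:ℝ) / (q - 1))) • φ‖
                ≤ ‖r‖ * (1 - (2 * γ * q) ^ ((1:ℝ) / (1 - q)) * (q - 1) / q *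
                    |F φ| ^ (q / (q - 1))) := hsd
              _ = ‖r‖ * (1 - c2 * |F φ| ^ p) := by rw [hc2, hc1, hpdef]
        _ ≤ ‖r‖ * (1 - c2 * (‖r‖ / N) ^ p) := by
            have : c2 * (‖r‖ / N) ^ p ≤ c2 * |F φ| ^ p :=
              mul_le_mul_of_nonneg_left hAp hc20.le
            nlinarith
  -- apply the recursion rate lemma
  set x : ℕ → ℝ := fun k => ‖f - fseq k‖ / N with hx
  have hx0 : ∀ k, 0 ≤ x k := fun k => by positivity
  have hx1 : x 0 ≤ 1 := by
    rw [hx]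
    simp only [h0, sub_zero]
    rw [div_le_one hNpos]
    exact hfN
  have hrec : ∀ k, x (k + 1) ≤ x k * (1 - c2 * x k ^ p) := by
    intro k
    have h1 := main k
    have h2 : ‖f - fseq (k+1)‖ / N ≤ ‖f - fseq k‖ * (1 - c2 * (‖f - fseq k‖ / N) ^ p) / N :=
      div_le_div_of_nonneg_right h1 hNpos.le
    calc x (k+1) = ‖f - fseq (k+1)‖ / N := rfl
      _ ≤ ‖f - fseq k‖ * (1 - c2 * (‖f - fseq k‖ / N) ^ p) / N := h2
      _ = x k * (1 - c2 * x k ^ p) := by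
          rw [hx]
          ring
  have hrate := rpga_rec_rate hp1 hc20 x hx0 hx1 hrec m (le_trans one_le_two hm)
  have hm1 : (1:ℝ) ≤ (m:ℝ) := by exact_mod_cast le_trans one_le_two hm
  have hsplit : (p * c2 * (m:ℝ)) ^ (-(1:ℝ) / p) =
      (p * c2) ^ (-(1:ℝ) / p) * (m:ℝ) ^ (-(1:ℝ) / p) :=
    Real.mul_rpow (by positivity) (by linarith)
  have hexp : -(1:ℝ) / p = (1:ℝ) / q - 1 := by
    rw [hpdef]
    field_simp
    ring
  have hfinal : ‖f - fseq m‖ = x m * N := by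
    rw [hx]
    field_simp
  rw [hfinal]
  calc x m * N ≤ (p * c2 * (m:ℝ)) ^ (-(1:ℝ) / p) * N :=
        mul_le_mul_of_nonneg_right hrate hNpos.le
    _ = (p * c2) ^ (-(1:ℝ) / p) * N * (m:ℝ) ^ ((1:ℝ) / q - 1) := by
        rw [hsplit, hexp]
        ring
end

section
/- Let X be a real Banach space whose modulus of smoothness satisfies ρ(u) ≤ γ u^q for all u > 0, where 1 < q ≤ 2 and γ > 0 is a constant, let D be a dictionary in X, let {t_k}_{k=1}^∞ be a weakness sequence with t_k ∈ (0, 1] for all k, and let f ∈ A_1(D). Suppose (f_m)_{m≥0} is generated by the Weak Rescaled Pure Greedy Algorithm WRPGA({t_k}, D) for f: f_0 = 0, and for each m ≥ 1, if f_{m−1} = f then f_m := f; otherwise, with F_{f−f_{m−1}} a norming functional of f − f_{m−1}, choose φ_m ∈ D with |F_{f−f_{m−1}}(φ_m)| ≥ t_m · sup_{φ∈D} |F_{f−f_{m−1}}(φ)|, set λ_m := sign(F_{f−f_{m−1}}(φ_m)) · ‖f − f_{m−1}‖ · (2γq)^{1/(1−q)} · |F_{f−f_{m−1}}(φ_m)|^{1/(q−1)},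 ĥ_m := f_{m−1} + λ_m φ_m, choose s_m ∈ ℝ with ‖f − s_m ĥ_m‖ = min_{s∈ℝ} ‖f − s ĥ_m‖, and set f_m := s_m ĥ_m. Then there is a constant c = c(γ, q) such that for every m ≥ 1, ‖f − f_m‖ ≤ c · |f|_{A_1(D)} · ( ∑_{k=1}^m t_k^{q/(q−1)} )^{1/q − 1}. -/
open scoped BigOperators

universe u

section Aux
variable {X : Type u} [NormedAddCommGroup X] [NormedSpace ℝ X]
variable {γ q : ℝ}

private lemma wrpga_smooth_pair (hρ : ∀ u : ℝ, 0 < u → modulusOfSmoothness X u ≤ γ * u ^ q)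
    (x y : X) (u : ℝ) (hu : 0 < u) (hx : ‖x‖ = 1) (hy : ‖y‖ = 1) :
    ‖x + u • y‖ + ‖x - u • y‖ ≤ 2 * (1 + γ * u ^ q) := by
  have hbdd : BddAbove {z : ℝ | ∃ f g : X, ‖f‖ = 1 ∧ ‖g‖ = 1 ∧
      z = (‖f + u • g‖ + ‖f - u • g‖) / 2 - 1} := by
    refine ⟨u, ?_⟩
    rintro z ⟨f, g, hf, hg, rfl⟩
    have h1 : ‖f + u • g‖ ≤ 1 + u := by
      calc ‖f + u • g‖ ≤ ‖f‖ + ‖u • g‖ := norm_add_le _ _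
      _ = 1 + u := by rw [hf, norm_smul, hg, Real.norm_eq_abs, abs_of_pos hu, mul_one]
    have h2 : ‖f - u • g‖ ≤ 1 + u := by
      calc ‖f - u • g‖ ≤ ‖f‖ + ‖u • g‖ := norm_sub_le _ _
      _ = 1 + u := by rw [hf, norm_smul, hg, Real.norm_eq_abs, abs_of_pos hu, mul_one]
    linarith
  have hmem : (‖x + u • y‖ + ‖x - u • y‖) / 2 - 1 ∈ {z : ℝ | ∃ f g : X, ‖f‖ = 1 ∧ ‖g‖ = 1 ∧
      z = (‖f + u • g‖ + ‖f - u • g‖) / 2 - 1} := ⟨x, y, hx, hy, rfl⟩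
  have := (le_csSup hbdd hmem).trans (hρ u hu)
  linarith

private lemma wrpga_smooth_scaled (hρ : ∀ u : ℝ, 0 < u → modulusOfSmoothness X u ≤ γ * u ^ q)
    (x y : X) (lam : ℝ) (hx : x ≠ 0) (hy : ‖y‖ = 1) (hlam : lam ≠ 0) :
    ‖x + lam • y‖ + ‖x - lam • y‖ ≤ 2 * ‖x‖ * (1 + γ * (|lam| / ‖x‖) ^ q) := by
  have hxn : (0:ℝ) < ‖x‖ := norm_pos_iff.mpr hx
  set a := ‖x‖
  set u := |lam| / a with hu
  have hupos : 0 < u := div_pos (abs_pos.mpr hlam) hxn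
  set x' := a⁻¹ • x with hx'
  set y' := (|lam|⁻¹ * lam) • y with hy'
  have hx'n : ‖x'‖ = 1 := by
    rw [hx', norm_smul, Real.norm_eq_abs, abs_of_pos (inv_pos.mpr hxn), inv_mul_cancel₀ hxn.ne']
  have hy'n : ‖y'‖ = 1 := by
    rw [hy', norm_smul, Real.norm_eq_abs, hy, mul_one, abs_mul, abs_inv, abs_abs,
      inv_mul_cancel₀ (abs_ne_zero.mpr hlam)]
  have key := wrpga_smooth_pair hρ x' y' u hupos hx'n hy'n
  have h1 : a • (x' + u • y') = x + lam • y := by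
    rw [hx', hy', smul_add, smul_inv_smul₀ hxn.ne', smul_smul, smul_smul, hu]
    congr 1
    congr 1
    field_simp
  have h2 : a • (x' - u • y') = x - lam • y := by
    rw [hx', hy', smul_sub, smul_inv_smul₀ hxn.ne', smul_smul, smul_smul, hu]
    congr 1
    congr 1
    field_simp
  have e1 : ‖x + lam • y‖ = a * ‖x' + u • y'‖ := by
    rw [← h1, norm_smul, Real.norm_eq_abs, abs_of_pos hxn]
  have e2 : ‖x - lam • y‖ = a * ‖x' - u • y'‖ := by
    rw [← h2, norm_smul, Real.norm_eq_abs, abs_of_pos hxn]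
  rw [e1, e2]
  calc a * ‖x' + u • y'‖ + a * ‖x' - u • y'‖ = a * (‖x' + u • y'‖ + ‖x' - u • y'‖) := by ring
  _ ≤ a * (2 * (1 + γ * u ^ q)) := mul_le_mul_of_nonneg_left key hxn.le
  _ = 2 * a * (1 + γ * (|lam| / a) ^ q) := by rw [hu]; ring

/-- At a minimizer of `s' ↦ ‖f - s' • h‖`, any norming functional of the residual
annihilates `h`. -/
private lemma wrpga_norming_zero_at_min (hq1 : 1 < q) (hγ : 0 < γ)
    (hρ : ∀ u : ℝ, 0 < u → modulusOfSmoothness X u ≤ γ * u ^ q)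
    (f h : X) (s : ℝ) (F : X →L[ℝ] ℝ) (hF : ‖F‖ = 1)
    (hFr : F (f - s • h) = ‖f - s • h‖) (hr : f - s • h ≠ 0)
    (hmin : ∀ s' : ℝ, ‖f - s • h‖ ≤ ‖f - s' • h‖) : F h = 0 := by
  by_cases hh : h = 0
  · simp [hh]
  set r := f - s • h with hrdef
  have hR : (0:ℝ) < ‖r‖ := norm_pos_iff.mpr hr
  have hN : (0:ℝ) < ‖h‖ := norm_pos_iff.mpr hh
  set K : ℝ := 2 * γ * ‖r‖ * (‖h‖ / ‖r‖) ^ q with hK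
  have hKpos : 0 < K := by
    have : (0:ℝ) < (‖h‖ / ‖r‖) ^ q := Real.rpow_pos_of_pos (div_pos hN hR) q
    positivity
  have hbound : ∀ u : ℝ, 0 < u → |F h| ≤ K * u ^ (q - 1) := by
    intro u hu
    have hulam : u * ‖h‖ ≠ 0 := by positivity
    have key := wrpga_smooth_scaled hρ r (‖h‖⁻¹ • h) (u * ‖h‖) hr
      (by rw [norm_smul, Real.norm_eq_abs, abs_of_pos (inv_pos.mpr hN), inv_mul_cancel₀ hN.ne'])
      hulam
    have hsm : (u * ‖h‖) • (‖h‖⁻¹ • h) = u • h := by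
      rw [smul_smul, mul_assoc, mul_inv_cancel₀ hN.ne', mul_one]
    rw [hsm] at key
    have habs : |u * ‖h‖| = u * ‖h‖ := abs_of_pos (by positivity)
    rw [habs] at key
    have hplus : ‖r‖ ≤ ‖r + u • h‖ := by
      have : f - (s - u) • h = r + u • h := by rw [hrdef, sub_smul]; abel
      rw [← this]; exact hmin (s - u)
    have hminus : ‖r‖ ≤ ‖r - u • h‖ := by
      have : f - (s + u) • h = r - u • h := by rw [hrdef, add_smul]; abel
      rw [← this]; exact hmin (s + u)
    have hpow : (u * ‖h‖ / ‖r‖) ^ q = u ^ q * (‖h‖ / ‖r‖) ^ q := by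
      rw [mul_div_assoc, Real.mul_rpow hu.le (by positivity)]
    have hupow : u ^ q = u ^ (q - 1) * u := by
      have : u ^ (q-1) * u ^ (1:ℝ) = u ^ q := by
        rw [← Real.rpow_add hu]; norm_num
      rw [Real.rpow_one] at this; rw [this]
    have hFm : F (r - u • h) ≤ ‖r - u • h‖ := by
      calc F (r - u • h) ≤ |F (r - u • h)| := le_abs_self _
      _ ≤ ‖F‖ * ‖r - u • h‖ := F.le_opNorm _
      _ = ‖r - u • h‖ := by rw [hF, one_mul]
    have hFp : F (r + u • h) ≤ ‖r + u • h‖ := by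
      calc F (r + u • h) ≤ |F (r + u • h)| := le_abs_self _
      _ ≤ ‖F‖ * ‖r + u • h‖ := F.le_opNorm _
      _ = ‖r + u • h‖ := by rw [hF, one_mul]
    have hFm' : F (r - u • h) = ‖r‖ - u * F h := by
      rw [map_sub, hFr, map_smul, smul_eq_mul]
    have hFp' : F (r + u • h) = ‖r‖ + u * F h := by
      rw [map_add, hFr, map_smul, smul_eq_mul]
    have h1 : ‖r - u • h‖ ≤ ‖r‖ + 2 * ‖r‖ * γ * (u * ‖h‖ / ‖r‖) ^ q := by linarith
    have h2 : ‖r + u • h‖ ≤ ‖r‖ + 2 * ‖r‖ * γ * (u * ‖h‖ / ‖r‖) ^ q := by linarith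
    have hb1 : -(u * F h) ≤ 2 * ‖r‖ * γ * (u * ‖h‖ / ‖r‖) ^ q := by
      rw [hFm'] at hFm; linarith
    have hb2 : u * F h ≤ 2 * ‖r‖ * γ * (u * ‖h‖ / ‖r‖) ^ q := by
      rw [hFp'] at hFp; linarith
    have habs2 : |F h| * u ≤ 2 * ‖r‖ * γ * (u * ‖h‖ / ‖r‖) ^ q := by
      rcases abs_cases (F h) with ⟨he, _⟩ | ⟨he, _⟩ <;> rw [he] <;> nlinarith [hb1, hb2]
    have : 2 * ‖r‖ * γ * (u * ‖h‖ / ‖r‖) ^ q = K * u ^ (q - 1) * u := by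
      rw [hpow, hupow, hK]; ring
    rw [this] at habs2
    exact le_of_mul_le_mul_right habs2 hu
  by_contra hFh
  have hFha : 0 < |F h| := abs_pos.mpr hFh
  set u := (|F h| / (2 * K)) ^ (1 / (q - 1) : ℝ) with hudef
  have hupos : 0 < u := Real.rpow_pos_of_pos (by positivity) _
  have hfin := hbound u hupos
  have hcalc : u ^ (q - 1) = |F h| / (2 * K) := by
    rw [hudef, ← Real.rpow_mul (by positivity), one_div,
      inv_mul_cancel₀ (sub_ne_zero.mpr hq1.ne'), Real.rpow_one]
  rw [hcalc] at hfin
  have : |F h| ≤ |F h| / 2 := by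
    calc |F h| ≤ K * (|F h| / (2 * K)) := hfin
    _ = |F h| / 2 := by field_simp
  linarith

private lemma wrpga_bernoulli (p x : ℝ) (hp : 0 ≤ p) (hx1 : x < 1) :
    (1 + p * x) * (1 - x) ^ p ≤ 1 := by
  have h1 : 1 + p * x ≤ Real.exp (p * x) := by
    have := Real.add_one_le_exp (p * x); linarith
  have h2 : (1 - x : ℝ) ≤ Real.exp (-x) := by
    have := Real.add_one_le_exp (-x); linarith
  have h3 : (1 - x) ^ p ≤ Real.exp (-x) ^ p :=
    Real.rpow_le_rpow (by linarith) h2 hp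
  have h4 : Real.exp (-x) ^ p = Real.exp (-x * p) := (Real.exp_mul _ _).symm
  calc (1 + p * x) * (1 - x) ^ p ≤ Real.exp (p * x) * Real.exp (-x * p) := by
        apply mul_le_mul h1 (h3.trans_eq h4) (Real.rpow_nonneg (by linarith) p)
          (Real.exp_pos _).le
  _ = 1 := by rw [← Real.exp_add]; ring_nf; exact Real.exp_zero

private lemma wrpga_dict_nonempty {D : Set X} (hdense : Dense (Submodule.span ℝ D : Set X))
    {x : X} (hx : x ≠ 0) : D.Nonempty := by
  by_contra hD
  rw [Set.not_nonempty_iff_eq_empty] at hD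
  subst hD
  rw [Submodule.span_empty] at hdense
  have := hdense x
  rw [Submodule.bot_coe, closure_singleton] at this
  exact hx this

private lemma wrpga_A1_apply_le {D : Set X} (hD : ∀ φ ∈ D, ‖φ‖ = 1) (hDne : D.Nonempty)
    (F : X →L[ℝ] ℝ) (hF : ‖F‖ = 1) {f : X} {M : ℝ} (hfM : f ∈ A1 X D M) :
    F f ≤ M * sSup {x : ℝ | ∃ ψ ∈ D, x = |F ψ|} := by
  set S := {x : ℝ | ∃ ψ ∈ D, x = |F ψ|} with hS
  have hbdd : BddAbove S := by
    refine ⟨1, ?_⟩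
    rintro x ⟨ψ, hψ, rfl⟩
    calc |F ψ| ≤ ‖F‖ * ‖ψ‖ := F.le_opNorm _
    _ = 1 := by rw [hF, hD ψ hψ, mul_one]
  have hsup0 : 0 ≤ sSup S := by
    obtain ⟨ψ₀, hψ₀⟩ := hDne
    exact (abs_nonneg (F ψ₀)).trans (le_csSup hbdd ⟨ψ₀, hψ₀, rfl⟩)
  have hpre : ∀ g ∈ A1Pre X D M, F g ≤ M * sSup S := by
    rintro g ⟨n, c, φ, hφ, hc, rfl⟩
    calc F (∑ i, c i • φ i) = ∑ i, c i * F (φ i) := by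
          rw [map_sum]; congr 1; ext i; rw [map_smul, smul_eq_mul]
    _ ≤ ∑ i, |c i * F (φ i)| := Finset.sum_le_sum fun i _ => le_abs_self _
    _ = ∑ i, |c i| * |F (φ i)| := by congr 1; ext i; rw [abs_mul]
    _ ≤ ∑ i, |c i| * sSup S := by
        refine Finset.sum_le_sum fun i _ => ?_
        exact mul_le_mul_of_nonneg_left (le_csSup hbdd ⟨φ i, hφ i, rfl⟩) (abs_nonneg _)
    _ = (∑ i, |c i|) * sSup S := by rw [← Finset.sum_mul]
    _ ≤ M * sSup S := mul_le_mul_of_nonneg_right hc hsup0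
  have hclosed : IsClosed {x : X | F x ≤ M * sSup S} :=
    isClosed_le F.continuous continuous_const
  exact closure_minimal hpre hclosed hfM

end Aux

/-- Convergence rate of the Weak Rescaled Pure Greedy Algorithm WRPGA({t_k}, D) in a Banach
space with `ρ(u) ≤ γ u^q`, `1 < q ≤ 2`: there is a constant `c = c(γ, q)` such that for
`f ∈ A₁(D)` the output `(f_m)` satisfies
`‖f − f_m‖ ≤ c · |f|_{A₁(D)} · (∑_{k=1}^m t_k^{q/(q−1)})^{1/q − 1}` for all `m ≥ 1`. -/
theorem wrpga_banach_rate (γ q : ℝ) (hq1 : 1 < q) (hq2 : q ≤ 2) (hγ : 0 < γ) :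
    ∃ c : ℝ, 0 < c ∧
      ∀ (X : Type u) [NormedAddCommGroup X] [NormedSpace ℝ X] [CompleteSpace X]
        (D : Set X), IsDictionary X D →
        (∀ u : ℝ, 0 < u → modulusOfSmoothness X u ≤ γ * u ^ q) →
        ∀ t : ℕ → ℝ, (∀ k : ℕ, t k ∈ Set.Ioc (0 : ℝ) 1) →
        ∀ f ∈ A1Class X D, ∀ fseq : ℕ → X, fseq 0 = 0 →
        (∀ m : ℕ,
          (fseq m = f → fseq (m + 1) = f) ∧
          (fseq m ≠ f → ∃ (F : X →L[ℝ] ℝ) (φ : X) (lam s : ℝ),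
            ‖F‖ = 1 ∧ F (f - fseq m) = ‖f - fseq m‖ ∧
            φ ∈ D ∧ |F φ| ≥ t (m + 1) * sSup {x : ℝ | ∃ ψ ∈ D, x = |F ψ|} ∧
            lam = Real.sign (F φ) * ‖f - fseq m‖ * (2 * γ * q) ^ ((1 : ℝ) / (1 - q)) *
              |F φ| ^ ((1 : ℝ) / (q - 1)) ∧
            (∀ s' : ℝ, ‖f - s • (fseq m + lam • φ)‖ ≤ ‖f - s' • (fseq m + lam • φ)‖) ∧
            fseq (m + 1) = s • (fseq m + lam • φ))) →
        ∀ m : ℕ, 1 ≤ m →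
          ‖f - fseq m‖ ≤ c * A1Norm X D f *
            (∑ k ∈ Finset.Icc 1 m, t k ^ (q / (q - 1))) ^ ((1 : ℝ) / q - 1) := by
  have hq0 : (0:ℝ) < q := lt_trans one_pos hq1
  have hq1' : (0:ℝ) < q - 1 := sub_pos.mpr hq1
  set p : ℝ := q / (q - 1) with hpdef
  have hppos : 0 < p := div_pos hq0 hq1'
  have h2γq : (0:ℝ) < 2 * γ * q := by positivity
  set A : ℝ := (2 * γ * q) ^ ((1:ℝ) / (1 - q)) with hAdef
  have hApos : 0 < A := Real.rpow_pos_of_pos h2γq _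
  set C : ℝ := A * (1 - 1/q) with hCdef
  have hCpos : 0 < C := by
    have h1q : (0:ℝ) < 1 - 1/q := by
      rw [sub_pos, div_lt_one hq0]; exact hq1
    exact mul_pos hApos h1q
  have hpC : (0:ℝ) < p * C := mul_pos hppos hCpos
  -- useful exponent facts
  have hAq1 : A ^ (q-1) = (2*γ*q)⁻¹ := by
    rw [hAdef, ← Real.rpow_mul h2γq.le]
    rw [show (1:ℝ)/(1-q)*(q-1) = (-1 : ℝ) by
      rw [div_mul_eq_mul_div, one_mul,
        div_eq_iff (sub_ne_zero.mpr (by linarith : (1:ℝ) ≠ q))]; ring]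
    exact Real.rpow_neg_one _
  have hAq : 2 * γ * A ^ q = A / q := by
    have hAsplit : A ^ q = A * A ^ (q-1) := by
      have h := Real.rpow_add hApos 1 (q-1)
      rw [Real.rpow_one] at h
      rw [show (1:ℝ) + (q-1) = q by ring] at h
      exact h
    rw [hAsplit, hAq1]
    field_simp
  have hCalt : C = A - 2 * γ * A ^ q := by
    rw [hAq, hCdef]; field_simp
  refine ⟨(p * C) ^ ((1:ℝ)/q - 1), Real.rpow_pos_of_pos hpC _, ?_⟩
  intro X _ _ _ D hDict hρ t ht f hf fseq h0 hstep m hm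
  obtain ⟨hDnorm, hDdense⟩ := hDict
  -- per-M estimate
  have main : ∀ M : ℝ, 0 < M → f ∈ A1 X D M →
      ‖f - fseq m‖ ≤ (p * C) ^ ((1:ℝ)/q - 1) * M *
        (∑ k ∈ Finset.Icc 1 m, t k ^ p) ^ ((1:ℝ)/q - 1) := by
    intro M hM0 hfM
    have key : ∀ n : ℕ, fseq n = f ∨ (fseq n ≠ f ∧
        (∃ (s₀ : ℝ) (h₀ : X), fseq n = s₀ • h₀ ∧ ∀ s' : ℝ, ‖f - s₀ • h₀‖ ≤ ‖f - s' • h₀‖) ∧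
        p * C * (∑ k ∈ Finset.Icc 1 n, t k ^ p) ≤ (M / ‖f - fseq n‖) ^ p) := by
      intro n
      induction n with
      | zero =>
        by_cases hf0 : fseq 0 = f
        · exact Or.inl hf0
        · refine Or.inr ⟨hf0, ⟨0, 0, by rw [h0, zero_smul], fun s' => by simp⟩, ?_⟩
          rw [show Finset.Icc 1 0 = ∅ from rfl]
          simp only [Finset.sum_empty, mul_zero]
          exact Real.rpow_nonneg (div_nonneg hM0.le (norm_nonneg _)) p
      | succ n ih =>
        rcases ih with heq | ⟨hne, ⟨s₀, h₀, hrep, hmin₀⟩, hsum⟩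
        · exact Or.inl ((hstep n).1 heq)
        obtain ⟨F, φ, lam, s, hF1, hFr, hφD, hFφ, hlam, hmin, hfs⟩ := (hstep n).2 hne
        by_cases hfe : fseq (n+1) = f
        · exact Or.inl hfe
        right
        refine ⟨hfe, ⟨s, fseq n + lam • φ, hfs, hmin⟩, ?_⟩
        have hrne : f - fseq n ≠ 0 := sub_ne_zero.mpr (Ne.symm hne)
        have hdn : (0:ℝ) < ‖f - fseq n‖ := norm_pos_iff.mpr hrne
        have hrne1 : f - fseq (n+1) ≠ 0 := sub_ne_zero.mpr (Ne.symm hfe)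
        have hdn1 : (0:ℝ) < ‖f - fseq (n+1)‖ := norm_pos_iff.mpr hrne1
        -- F annihilates fseq n
        have hFfseq : F (fseq n) = 0 := by
          have hFr' : F (f - s₀ • h₀) = ‖f - s₀ • h₀‖ := by rw [← hrep]; exact hFr
          have hrne' : f - s₀ • h₀ ≠ 0 := by rw [← hrep]; exact hrne
          have hz : F h₀ = 0 :=
            wrpga_norming_zero_at_min hq1 hγ hρ f h₀ s₀ F hF1 hFr' hrne' hmin₀
          rw [hrep, map_smul, smul_eq_mul, hz, mul_zero]
        have hDne : D.Nonempty := wrpga_dict_nonempty hDdense hrne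
        -- lower bound on |F φ|
        set b : ℝ := |F φ| with hbdef
        have hFf : F f = ‖f - fseq n‖ := by
          have := map_sub F f (fseq n)
          rw [hFfseq, sub_zero] at this
          rw [← this, hFr]
        have hsup : ‖f - fseq n‖ ≤ M * sSup {x : ℝ | ∃ ψ ∈ D, x = |F ψ|} := by
          rw [← hFf]; exact wrpga_A1_apply_le hDnorm hDne F hF1 hfM
        have hb : t (n+1) * (‖f - fseq n‖ / M) ≤ b := by
          have hsup' : ‖f - fseq n‖ / M ≤ sSup {x : ℝ | ∃ ψ ∈ D, x = |F ψ|} := by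
            rw [div_le_iff₀ hM0]; linarith [hsup]
          calc t (n+1) * (‖f - fseq n‖ / M)
              ≤ t (n+1) * sSup {x : ℝ | ∃ ψ ∈ D, x = |F ψ|} :=
                mul_le_mul_of_nonneg_left hsup' (ht (n+1)).1.le
          _ ≤ b := hFφ
        have hbpos : (0:ℝ) < b := by
          have : (0:ℝ) < t (n+1) * (‖f - fseq n‖ / M) :=
            mul_pos (ht (n+1)).1 (div_pos hdn hM0)
          linarith
        have hFφne : F φ ≠ 0 := abs_pos.mp hbpos
        -- |lam| and lam * F φ
        have hsign : |Real.sign (F φ)| = 1 := by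
          rcases hFφne.lt_or_gt with h|h
          · rw [Real.sign_of_neg h]; norm_num
          · rw [Real.sign_of_pos h]; norm_num
        have hbe : (0:ℝ) < b ^ ((1:ℝ)/(q-1)) := Real.rpow_pos_of_pos hbpos _
        have hlamabs : |lam| = ‖f - fseq n‖ * (A * b ^ ((1:ℝ)/(q-1))) := by
          rw [hlam, abs_mul, abs_mul, abs_mul, hsign, abs_norm, abs_of_pos hApos,
            abs_of_pos hbe]
          ring
        have hlampos : (0:ℝ) < |lam| := by
          rw [hlamabs]; positivity
        have hlamne : lam ≠ 0 := abs_pos.mp hlampos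
        have hsx : Real.sign (F φ) * F φ = b := by
          rcases hFφne.lt_or_gt with h|h
          · rw [Real.sign_of_neg h, hbdef, abs_of_neg h]; ring
          · rw [Real.sign_of_pos h, hbdef, abs_of_pos h]; ring
        have hlamF : lam * F φ = ‖f - fseq n‖ * (A * (b ^ ((1:ℝ)/(q-1)) * b)) := by
          calc lam * F φ
              = ‖f - fseq n‖ * (A * (b ^ ((1:ℝ)/(q-1)) * (Real.sign (F φ) * F φ))) := by
                rw [hlam]; ring
          _ = ‖f - fseq n‖ * (A * (b ^ ((1:ℝ)/(q-1)) * b)) := by rw [hsx]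
        -- power identities
        have hbp1 : b ^ ((1:ℝ)/(q-1)) * b = b ^ p := by
          have e : (1:ℝ)/(q-1) + 1 = p := by rw [hpdef]; field_simp; ring
          rw [← e, Real.rpow_add hbpos, Real.rpow_one]
        have hbq : (A * b ^ ((1:ℝ)/(q-1))) ^ q = A ^ q * b ^ p := by
          rw [Real.mul_rpow hApos.le hbe.le, ← Real.rpow_mul hbpos.le]
          congr 2
          rw [hpdef]; field_simp
        -- smoothness step
        have keysm := wrpga_smooth_scaled hρ (f - fseq n) φ lam hrne (hDnorm φ hφD) hlamne
        have hu : |lam| / ‖f - fseq n‖ = A * b ^ ((1:ℝ)/(q-1)) := by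
          rw [hlamabs, mul_comm, mul_div_assoc, div_self hdn.ne', mul_one]
        rw [hu, hbq] at keysm
        have hFplus : ‖f - fseq n‖ + lam * F φ ≤ ‖(f - fseq n) + lam • φ‖ := by
          have hval : F ((f - fseq n) + lam • φ) = ‖f - fseq n‖ + lam * F φ := by
            rw [map_add, hFr, map_smul, smul_eq_mul]
          calc ‖f - fseq n‖ + lam * F φ = F ((f - fseq n) + lam • φ) := hval.symm
          _ ≤ |F ((f - fseq n) + lam • φ)| := le_abs_self _
          _ ≤ ‖F‖ * ‖(f - fseq n) + lam • φ‖ := F.le_opNorm _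
          _ = ‖(f - fseq n) + lam • φ‖ := by rw [hF1, one_mul]
        rw [hlamF, hbp1] at hFplus
        have hminle : ‖f - fseq (n+1)‖ ≤ ‖(f - fseq n) - lam • φ‖ := by
          rw [hfs]
          calc ‖f - s • (fseq n + lam • φ)‖ ≤ ‖f - (1:ℝ) • (fseq n + lam • φ)‖ := hmin 1
          _ = ‖(f - fseq n) - lam • φ‖ := by rw [one_smul]; congr 1; abel
        have hfinal : 2 * ‖f - fseq n‖ * (1 + γ * (A ^ q * b ^ p))
            - (‖f - fseq n‖ + ‖f - fseq n‖ * (A * b ^ p))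
            = ‖f - fseq n‖ * (1 - C * b ^ p) := by
          rw [hCalt]; ring
        have hkey2 : ‖f - fseq (n+1)‖ ≤ ‖f - fseq n‖ * (1 - C * b ^ p) := by
          linarith [keysm, hFplus, hminle]
        -- positivity of the contraction factor
        have hxpos : (0:ℝ) < C * b ^ p := mul_pos hCpos (Real.rpow_pos_of_pos hbpos _)
        have hx1 : C * b ^ p < 1 := by
          by_contra hcon
          push_neg at hcon
          have : ‖f - fseq n‖ * (1 - C * b ^ p) ≤ 0 :=
            mul_nonpos_of_nonneg_of_nonpos (norm_nonneg _) (by linarith)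
          linarith [hdn1, hkey2]
        have h1x : (0:ℝ) < 1 - C * b ^ p := by linarith
        -- inverse power recursion
        have hmono : M / (‖f - fseq n‖ * (1 - C * b ^ p)) ≤ M / ‖f - fseq (n+1)‖ :=
          div_le_div_of_nonneg_left hM0.le hdn1 hkey2
        have hstep1 : (M / (‖f - fseq n‖ * (1 - C * b ^ p))) ^ p ≤ (M / ‖f - fseq (n+1)‖) ^ p :=
          Real.rpow_le_rpow (by positivity) hmono hppos.le
        have hsplit : (M / (‖f - fseq n‖ * (1 - C * b ^ p))) ^ p
            = (M / ‖f - fseq n‖) ^ p * ((1 - C * b ^ p) ^ p)⁻¹ := by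
          rw [← div_div, Real.div_rpow (by positivity) h1x.le, div_eq_mul_inv]
        have hbern : 1 + p * (C * b ^ p) ≤ ((1 - C * b ^ p) ^ p)⁻¹ := by
          have hber := wrpga_bernoulli p (C * b ^ p) hppos.le hx1
          have hpow : (0:ℝ) < (1 - C * b ^ p) ^ p := Real.rpow_pos_of_pos h1x p
          rw [← one_div, le_div_iff₀ hpow]
          exact hber
        have hMdp : (0:ℝ) < (M / ‖f - fseq n‖) ^ p :=
          Real.rpow_pos_of_pos (div_pos hM0 hdn) p
        have hbp_ge : t (n+1) ^ p ≤ (M / ‖f - fseq n‖) ^ p * b ^ p := by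
          have htn : (0:ℝ) ≤ t (n+1) * (‖f - fseq n‖ / M) :=
            mul_nonneg (ht (n+1)).1.le (by positivity)
          have ht1 : (t (n+1) * (‖f - fseq n‖ / M)) ^ p ≤ b ^ p :=
            Real.rpow_le_rpow htn hb hppos.le
          have ht2 : (M / ‖f - fseq n‖) ^ p * (t (n+1) * (‖f - fseq n‖ / M)) ^ p
              = t (n+1) ^ p := by
            rw [← Real.mul_rpow (by positivity) htn]
            congr 1
            field_simp
          calc t (n+1) ^ p = (M / ‖f - fseq n‖) ^ p * (t (n+1) * (‖f - fseq n‖ / M)) ^ p :=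
                ht2.symm
          _ ≤ (M / ‖f - fseq n‖) ^ p * b ^ p :=
                mul_le_mul_of_nonneg_left ht1 hMdp.le
        calc p * C * (∑ k ∈ Finset.Icc 1 (n+1), t k ^ p)
            = p * C * (∑ k ∈ Finset.Icc 1 n, t k ^ p) + p * C * t (n+1) ^ p := by
              rw [Finset.sum_Icc_succ_top (by omega : 1 ≤ n + 1)]; ring
        _ ≤ (M / ‖f - fseq n‖) ^ p + p * C * ((M / ‖f - fseq n‖) ^ p * b ^ p) := by
              have := mul_le_mul_of_nonneg_left hbp_ge hpC.le
              linarith [hsum]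
        _ = (M / ‖f - fseq n‖) ^ p * (1 + p * (C * b ^ p)) := by ring
        _ ≤ (M / ‖f - fseq n‖) ^ p * ((1 - C * b ^ p) ^ p)⁻¹ :=
              mul_le_mul_of_nonneg_left hbern hMdp.le
        _ = (M / (‖f - fseq n‖ * (1 - C * b ^ p))) ^ p := hsplit.symm
        _ ≤ (M / ‖f - fseq (n+1)‖) ^ p := hstep1
    -- conclude the per-M estimate from the key invariant
    rcases key m with heq | ⟨hnem, _, hsum⟩
    · have hz : ‖f - fseq m‖ = 0 := by rw [heq, sub_self, norm_zero]
      rw [hz]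
      have h1 : (0:ℝ) ≤ (p * C) ^ ((1:ℝ)/q - 1) := (Real.rpow_pos_of_pos hpC _).le
      have h2 : (0:ℝ) ≤ (∑ k ∈ Finset.Icc 1 m, t k ^ p) ^ ((1:ℝ)/q - 1) :=
        Real.rpow_nonneg (Finset.sum_nonneg fun k _ =>
          Real.rpow_nonneg (ht k).1.le p) _
      positivity
    · have hSpos : (0:ℝ) < ∑ k ∈ Finset.Icc 1 m, t k ^ p :=
        Finset.sum_pos (fun k _ => Real.rpow_pos_of_pos (ht k).1 p)
          ⟨1, Finset.mem_Icc.mpr ⟨le_refl 1, hm⟩⟩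
      have hdm : (0:ℝ) < ‖f - fseq m‖ := norm_pos_iff.mpr (sub_ne_zero.mpr (Ne.symm hnem))
      set S : ℝ := ∑ k ∈ Finset.Icc 1 m, t k ^ p with hSdef
      have hpCS : (0:ℝ) < p * C * S := by positivity
      have h1 : (p * C * S) ^ ((1:ℝ)/p) ≤ ((M / ‖f - fseq m‖) ^ p) ^ ((1:ℝ)/p) :=
        Real.rpow_le_rpow hpCS.le hsum (by positivity)
      have h2 : ((M / ‖f - fseq m‖) ^ p) ^ ((1:ℝ)/p) = M / ‖f - fseq m‖ := by
        rw [← Real.rpow_mul (by positivity), mul_one_div, div_self hppos.ne',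
          Real.rpow_one]
      rw [h2] at h1
      have h3 : (0:ℝ) < (p * C * S) ^ ((1:ℝ)/p) := Real.rpow_pos_of_pos hpCS _
      have h4 : ‖f - fseq m‖ ≤ M / (p * C * S) ^ ((1:ℝ)/p) := by
        rw [le_div_iff₀ h3]
        have := (le_div_iff₀ hdm).mp h1
        linarith [this]
      have h5 : (p * C * S) ^ ((1:ℝ)/p) = (p * C) ^ ((1:ℝ)/p) * S ^ ((1:ℝ)/p) :=
        Real.mul_rpow hpC.le hSpos.le
      have hexp : (1:ℝ)/q - 1 = -((1:ℝ)/p) := by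
        rw [hpdef]
        field_simp
        ring
      rw [hexp, Real.rpow_neg hpC.le, Real.rpow_neg hSpos.le]
      have h6 : ((p * C) ^ ((1:ℝ)/p))⁻¹ * M * (S ^ ((1:ℝ)/p))⁻¹
          = M / (p * C * S) ^ ((1:ℝ)/p) := by
        rw [h5]
        have hA1 : (0:ℝ) < (p * C) ^ ((1:ℝ)/p) := Real.rpow_pos_of_pos hpC _
        have hA2 : (0:ℝ) < S ^ ((1:ℝ)/p) := Real.rpow_pos_of_pos hSpos _
        field_simp
      rw [h6]
      exact h4
  -- pass to the infimum over M
  obtain ⟨M₀, hM₀, hfM₀⟩ := Set.mem_iUnion₂.mp hf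
  have hM₀' : (0:ℝ) < M₀ := hM₀
  have hSetne : {M : ℝ | 0 < M ∧ f ∈ A1 X D M}.Nonempty := ⟨M₀, hM₀', hfM₀⟩
  have hSpos : (0:ℝ) < ∑ k ∈ Finset.Icc 1 m, t k ^ p :=
    Finset.sum_pos (fun k _ => Real.rpow_pos_of_pos (ht k).1 p)
      ⟨1, Finset.mem_Icc.mpr ⟨le_refl 1, hm⟩⟩
  set T : ℝ := (∑ k ∈ Finset.Icc 1 m, t k ^ p) ^ ((1:ℝ)/q - 1) with hTdef
  have hTpos : (0:ℝ) < T := Real.rpow_pos_of_pos hSpos _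
  set c : ℝ := (p * C) ^ ((1:ℝ)/q - 1) with hcdef
  have hcpos : (0:ℝ) < c := Real.rpow_pos_of_pos hpC _
  have hcT : (0:ℝ) < c * T := mul_pos hcpos hTpos
  have hlow : ∀ M ∈ {M : ℝ | 0 < M ∧ f ∈ A1 X D M}, ‖f - fseq m‖ / (c * T) ≤ M := by
    rintro M ⟨hMpos, hMmem⟩
    rw [div_le_iff₀ hcT]
    calc ‖f - fseq m‖ ≤ c * M * T := main M hMpos hMmem
    _ = M * (c * T) := by ring
  have hinf := le_csInf hSetne hlow
  have : ‖f - fseq m‖ ≤ sInf {M : ℝ | 0 < M ∧ f ∈ A1 X D M} * (c * T) :=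
    (div_le_iff₀ hcT).mp hinf
  calc ‖f - fseq m‖ ≤ sInf {M : ℝ | 0 < M ∧ f ∈ A1 X D M} * (c * T) := this
  _ = c * A1Norm X D f * T := by rw [A1Norm]; ring
end
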